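/- arXiv:1708.04794 — 2 statements merged into one kernel-verified Lean document; each statement's English description precedes it below -/
import Mathlib

section
/- Newton's inequality for (n−1)-tuples: for any λ ∈ ℝ^{n-1} and 2 ≤ k ≤ n−1, σ_k(λ)·σ_{k−2}(λ) ≤ ((k−1)(n−k))/(k(n−k+1)) · (σ_{k−1}(λ))². -/
open Polynomial

/-- `esymm m k f` : the `k`-th elementary symmetric polynomial of `f 0, …, f (m-1)`. -/
noncomputable def esymm (m k : ℕ) (f : Fin m → ℝ) : ℝ :=
  ∑ s ∈ Finset.univ.powersetCard k, ∏ i ∈ s, f i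

/-- "real-rooted": number of real roots (with multiplicity) equals the degree. -/
def RR (p : Polynomial ℝ) : Prop := Multiset.card p.roots = p.natDegree

lemma RR_one : RR (1 : Polynomial ℝ) := by simp [RR]

lemma RR_C (c : ℝ) : RR (Polynomial.C c) := by simp [RR]

lemma RR_mul {p q : Polynomial ℝ} (hp : RR p) (hq : RR q) : RR (p * q) := by
  rcases eq_or_ne p 0 with rfl | hp0
  · simp [RR]
  rcases eq_or_ne q 0 with rfl | hq0
  · simp [RR]
  unfold RR at *
  rw [Polynomial.roots_mul (mul_ne_zero hp0 hq0), Polynomial.natDegree_mul hp0 hq0,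
    Multiset.card_add, hp, hq]

lemma RR_derivative {p : Polynomial ℝ} (hp : RR p) : RR (Polynomial.derivative p) := by
  unfold RR at *
  have h1 := Polynomial.card_roots_le_derivative p
  have h2 := Polynomial.card_roots' (Polynomial.derivative p)
  have h3 := Polynomial.natDegree_derivative_le p
  omega

lemma RR_iterate {p : Polynomial ℝ} (hp : RR p) (j : ℕ) :
    RR (Polynomial.derivative^[j] p) := by
  induction j with
  | zero => simpa
  | succ j ih => rw [Function.iterate_succ_apply']; exact RR_derivative ih

lemma RR_X_sub_C (c : ℝ) : RR (Polynomial.X - Polynomial.C c) := by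
  simp [RR, Polynomial.roots_X_sub_C]

lemma RR_linear (c : ℝ) : RR (1 - Polynomial.C c * Polynomial.X) := by
  rcases eq_or_ne c 0 with rfl | hc
  · simpa using RR_one
  · have h : (1 - Polynomial.C c * Polynomial.X : Polynomial ℝ)
        = Polynomial.C (-c) * (Polynomial.X - Polynomial.C c⁻¹) := by
      rw [mul_sub, ← Polynomial.C_mul]
      field_simp
      rw [Polynomial.C_neg, Polynomial.C_neg, Polynomial.C_1]
      ring
    rw [h]
    exact RR_mul (RR_C _) (RR_X_sub_C _)

lemma reverse_X_sub_C (c : ℝ) :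
    (Polynomial.X - Polynomial.C c).reverse = 1 - Polynomial.C c * Polynomial.X := by
  ext n
  rw [Polynomial.coeff_reverse, Polynomial.natDegree_X_sub_C]
  rcases n with _ | _ | n
  · rw [Polynomial.revAt_le (by omega)]; simp [Polynomial.coeff_one]
  · rw [Polynomial.revAt_le (by omega)]; simp [Polynomial.coeff_one]
  · rw [Polynomial.revAt_eq_self_of_lt (by omega)]
    simp [Polynomial.coeff_X, Polynomial.coeff_one]

lemma RR_reverse {p : Polynomial ℝ} (hp : RR p) : RR p.reverse := by
  have key : ∀ s : Multiset ℝ,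
      RR ((s.map fun a => Polynomial.X - Polynomial.C a).prod).reverse := by
    intro s
    induction s using Multiset.induction with
    | empty =>
      rw [Multiset.map_zero, Multiset.prod_zero, ← Polynomial.C_1, Polynomial.reverse_C,
        Polynomial.C_1]
      exact RR_one
    | cons a s ih =>
      rw [Multiset.map_cons, Multiset.prod_cons, Polynomial.reverse_mul_of_domain,
        reverse_X_sub_C]
      exact RR_mul (RR_linear a) ih
  have hfac := Polynomial.C_leadingCoeff_mul_prod_multiset_X_sub_C hp
  rw [show p.reverse = (Polynomial.C p.leadingCoeff *
      (p.roots.map fun a => Polynomial.X - Polynomial.C a).prod).reverse by rw [hfac],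
    Polynomial.reverse_mul_of_domain, Polynomial.reverse_C]
  exact RR_mul (RR_C _) (key _)

lemma desc_fact (n k : ℕ) : (k + n).descFactorial n * k.factorial = (k + n).factorial := by
  induction n with
  | zero => simp
  | succ n ih =>
    have h : k + (n + 1) = (k + n) + 1 := rfl
    rw [h, Nat.succ_descFactorial_succ, mul_assoc, ih, Nat.factorial_succ]

lemma newton_core (m k : ℕ) (hk2 : 2 ≤ k) (hkm : k ≤ m) (lam : Fin m → ℝ) :
    esymm m k lam * esymm m (k - 2) lam ≤
      (((k : ℝ) - 1) * ((m : ℝ) - k + 1)) / ((k : ℝ) * ((m : ℝ) - k + 2)) *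
        (esymm m (k - 1) lam) ^ 2 := by
  obtain ⟨a, rfl⟩ : ∃ a, k = a + 2 := ⟨k - 2, by omega⟩
  obtain ⟨d, rfl⟩ : ∃ d, m = a + 2 + d := ⟨m - (a + 2), by omega⟩
  clear hk2 hkm
  have i0 : a + 2 - 2 = a := by omega
  have i1 : a + 2 - 1 = a + 1 := by omega
  rw [i0, i1]
  set E : ℕ → ℝ := fun j => esymm (a + 2 + d) j lam with hE
  suffices h : E (a + 2) * E a * (((a : ℝ) + 2) * ((d : ℝ) + 2)) ≤
      (((a : ℝ) + 1) * ((d : ℝ) + 1)) * E (a + 1) ^ 2 by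
    have he : (0 : ℝ) < ((a + 2 : ℕ) : ℝ) * (((a + 2 + d : ℕ) : ℝ) - ((a + 2 : ℕ) : ℝ) + 2) := by
      push_cast
      nlinarith [Nat.cast_nonneg (α := ℝ) a, Nat.cast_nonneg (α := ℝ) d]
    rw [div_mul_eq_mul_div, le_div_iff₀ he]
    push_cast
    push_cast at h
    nlinarith [h]
  by_cases hE2 : E (a + 2) = 0
  · rw [hE2, zero_mul, zero_mul]
    positivity
  -- the polynomial with roots -lam i
  set p : Polynomial ℝ := ∏ i : Fin (a + 2 + d), (Polynomial.X + Polynomial.C (lam i)) with hp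
  have hmono : p.Monic :=
    Polynomial.monic_prod_of_monic _ _ fun i _ => Polynomial.monic_X_add_C _
  have hpdeg : p.natDegree = a + 2 + d := by
    rw [hp, Polynomial.natDegree_prod _ _
      fun i _ => (Polynomial.monic_X_add_C (lam i)).ne_zero]
    simp [Polynomial.natDegree_X_add_C]
  have hcard : (Finset.univ : Finset (Fin (a + 2 + d))).card = a + 2 + d := by simp
  have hpcoeff : ∀ j, j ≤ a + 2 + d → p.coeff j = E (a + 2 + d - j) := by
    intro j hj
    rw [hp, Finset.prod_X_add_C_coeff _ _ (by rw [hcard]; exact hj), hcard]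
    rfl
  have hpRR : RR p := by
    rw [hp]
    refine Finset.prod_induction _ RR (fun f g => RR_mul) RR_one fun i _ => ?_
    have h : Polynomial.X + Polynomial.C (lam i)
        = Polynomial.X - Polynomial.C (-(lam i)) := by
      rw [Polynomial.C_neg]; ring
    rw [h]; exact RR_X_sub_C _
  -- differentiate d times
  set q : Polynomial ℝ := Polynomial.derivative^[d] p with hq
  have hqRR : RR q := RR_iterate hpRR d
  have hqcoeff : ∀ i, q.coeff i = ((i + d).descFactorial d : ℝ) * p.coeff (i + d) := by
    intro i
    rw [hq, Polynomial.coeff_iterate_derivative, nsmul_eq_mul]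
  have hqdeg : q.natDegree = a + 2 := by
    refine le_antisymm ?_ (Polynomial.le_natDegree_of_ne_zero ?_)
    · have h := Polynomial.natDegree_iterate_derivative p d
      rw [hq]; omega
    · rw [hqcoeff]
      have h1 : p.coeff (a + 2 + d) = 1 := by
        rw [show a + 2 + d = p.natDegree from hpdeg.symm]
        exact hmono.coeff_natDegree
      rw [h1, mul_one]
      have hpos : (a + 2 + d).descFactorial d ≠ 0 := by
        rw [Ne, Nat.descFactorial_eq_zero_iff_lt]
        omega
      exact_mod_cast hpos
  -- reverse
  set u : Polynomial ℝ := q.reverse with hu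
  have huRR : RR u := RR_reverse hqRR
  have hucoeff : ∀ i, i ≤ a + 2 → u.coeff i = q.coeff (a + 2 - i) := by
    intro i hi
    rw [hu, Polynomial.coeff_reverse, hqdeg, Polynomial.revAt_le hi]
  have hucoeff' : ∀ i, a + 2 < i → u.coeff i = 0 := by
    intro i hi
    rw [hu, Polynomial.coeff_reverse, hqdeg, Polynomial.revAt_eq_self_of_lt hi]
    exact Polynomial.coeff_eq_zero_of_natDegree_lt (by omega)
  -- differentiate a more times
  set r : Polynomial ℝ := Polynomial.derivative^[a] u with hr
  have hrRR : RR r := RR_iterate huRR a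
  have hrcoeff : ∀ i, r.coeff i = ((i + a).descFactorial a : ℝ) * u.coeff (i + a) := by
    intro i
    rw [hr, Polynomial.coeff_iterate_derivative, nsmul_eq_mul]
  -- factorial facts
  set F : ℝ := (a.factorial : ℝ) with hF
  set G : ℝ := (d.factorial : ℝ) with hG
  have hFpos : (0 : ℝ) < F := by rw [hF]; exact_mod_cast a.factorial_pos
  have hGpos : (0 : ℝ) < G := by rw [hG]; exact_mod_cast d.factorial_pos
  have hA0 : ((a.descFactorial a : ℕ) : ℝ) = F := by
    rw [Nat.descFactorial_self]
  have hA1 : (((1 + a).descFactorial a : ℕ) : ℝ) = ((a : ℝ) + 1) * F := by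
    have h := desc_fact a 1
    have h2 : (1 + a).descFactorial a = (a + 1) * a.factorial := by
      rw [Nat.factorial_one, mul_one] at h
      rw [h, show 1 + a = a + 1 from by omega, Nat.factorial_succ]
    rw [h2]; push_cast; ring
  have hA2 : 2 * (((2 + a).descFactorial a : ℕ) : ℝ)
      = ((a : ℝ) + 2) * ((a : ℝ) + 1) * F := by
    have h := desc_fact a 2
    have h2 : (2 + a).descFactorial a * 2 = (a + 2) * ((a + 1) * a.factorial) := by
      rw [show (2 : ℕ).factorial = 2 from rfl] at h
      rw [h, show 2 + a = a + 1 + 1 from by omega, Nat.factorial_succ, Nat.factorial_succ]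
    have := congrArg (fun x : ℕ => (x : ℝ)) h2
    push_cast at this
    push_cast
    linarith
  have hD0 : ((d.descFactorial d : ℕ) : ℝ) = G := by
    rw [Nat.descFactorial_self]
  have hD1 : (((1 + d).descFactorial d : ℕ) : ℝ) = ((d : ℝ) + 1) * G := by
    have h := desc_fact d 1
    have h2 : (1 + d).descFactorial d = (d + 1) * d.factorial := by
      rw [Nat.factorial_one, mul_one] at h
      rw [h, show 1 + d = d + 1 from by omega, Nat.factorial_succ]
    rw [h2]; push_cast; ring
  have hD2 : 2 * (((2 + d).descFactorial d : ℕ) : ℝ)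
      = ((d : ℝ) + 2) * ((d : ℝ) + 1) * G := by
    have h := desc_fact d 2
    have h2 : (2 + d).descFactorial d * 2 = (d + 2) * ((d + 1) * d.factorial) := by
      rw [show (2 : ℕ).factorial = 2 from rfl] at h
      rw [h, show 2 + d = d + 1 + 1 from by omega, Nat.factorial_succ, Nat.factorial_succ]
    have := congrArg (fun x : ℕ => (x : ℝ)) h2
    push_cast at this
    push_cast
    linarith
  -- the three coefficients of r
  have hq0 : q.coeff 0 = G * E (a + 2) := by
    rw [hqcoeff, Nat.zero_add, hpcoeff d (by omega), hD0,
      show a + 2 + d - d = a + 2 from by omega]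
  have hq1 : q.coeff 1 = ((d : ℝ) + 1) * G * E (a + 1) := by
    rw [hqcoeff, hpcoeff (1 + d) (by omega), hD1,
      show a + 2 + d - (1 + d) = a + 1 from by omega]
  have hq2 : 2 * q.coeff 2 = ((d : ℝ) + 2) * ((d : ℝ) + 1) * G * E a := by
    rw [hqcoeff, hpcoeff (2 + d) (by omega),
      show a + 2 + d - (2 + d) = a from by omega, ← mul_assoc, hD2]
  have hr0 : 2 * r.coeff 0 = F * (((d : ℝ) + 2) * ((d : ℝ) + 1) * G * E a) := by
    rw [hrcoeff, Nat.zero_add, hucoeff a (by omega),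
      show a + 2 - a = 2 from by omega, hA0]
    rw [show 2 * (F * q.coeff 2) = F * (2 * q.coeff 2) from by ring, hq2]
  have hr1 : r.coeff 1 = ((a : ℝ) + 1) * F * (((d : ℝ) + 1) * G * E (a + 1)) := by
    rw [hrcoeff, hucoeff (1 + a) (by omega),
      show a + 2 - (1 + a) = 1 from by omega, hA1, hq1]
  have hr2 : 2 * r.coeff 2 = ((a : ℝ) + 2) * ((a : ℝ) + 1) * F * (G * E (a + 2)) := by
    rw [hrcoeff, hucoeff (2 + a) (by omega),
      show a + 2 - (2 + a) = 0 from by omega, hq0, ← mul_assoc, hA2]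
  -- r has degree 2
  have hr2ne : r.coeff 2 ≠ 0 := by
    intro h0
    rw [h0, mul_zero] at hr2
    have : E (a + 2) = 0 := by
      have h1 : ((a : ℝ) + 2) * ((a : ℝ) + 1) * F * G ≠ 0 := by positivity
      have h2 : ((a : ℝ) + 2) * ((a : ℝ) + 1) * F * (G * E (a + 2))
          = ((a : ℝ) + 2) * ((a : ℝ) + 1) * F * G * E (a + 2) := by ring
      rw [h2] at hr2
      exact (mul_eq_zero.mp hr2.symm).resolve_left h1
    exact hE2 this
  have hrdeg : r.natDegree = 2 := by
    refine le_antisymm (Polynomial.natDegree_le_iff_coeff_eq_zero.mpr fun N hN => ?_)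
      (Polynomial.le_natDegree_of_ne_zero hr2ne)
    rw [hrcoeff, hucoeff' (N + a) (by omega), mul_zero]
  -- r has a real root
  have hrne : r ≠ 0 := fun h0 => hr2ne (by rw [h0]; simp)
  have hcard2 : Multiset.card r.roots = 2 := by rw [hrRR, hrdeg]
  obtain ⟨x, hx⟩ := Multiset.exists_mem_of_ne_zero
    (show r.roots ≠ 0 from fun h0 => by simp [h0] at hcard2)
  have hx0 : r.eval x = 0 := (Polynomial.mem_roots hrne).mp hx
  have heval : r.coeff 0 + r.coeff 1 * x + r.coeff 2 * x ^ 2 = 0 := by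
    have h := Polynomial.eval_eq_sum_range (p := r) x
    rw [hrdeg, Finset.sum_range_succ, Finset.sum_range_succ, Finset.sum_range_one] at h
    rw [hx0] at h
    rw [show r.coeff 0 + r.coeff 1 * x + r.coeff 2 * x ^ 2
      = r.coeff 0 * x ^ 0 + r.coeff 1 * x ^ 1 + r.coeff 2 * x ^ 2 from by ring, ← h]
  have keyeq : r.coeff 1 ^ 2 - 4 * r.coeff 2 * r.coeff 0
      = (2 * r.coeff 2 * x + r.coeff 1) ^ 2
        - 4 * r.coeff 2 * (r.coeff 0 + r.coeff 1 * x + r.coeff 2 * x ^ 2) := by ring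
  rw [heval] at keyeq
  have key : 4 * r.coeff 2 * r.coeff 0 ≤ r.coeff 1 ^ 2 := by
    have hsq := sq_nonneg (2 * r.coeff 2 * x + r.coeff 1)
    linarith [keyeq]
  -- turn key into the goal
  have hc : (0 : ℝ) < (((a : ℝ) + 1) * ((d : ℝ) + 1)) * (F * G) ^ 2 := by positivity
  have h4 : (((a : ℝ) + 2) * ((a : ℝ) + 1) * F * (G * E (a + 2)))
        * (F * (((d : ℝ) + 2) * ((d : ℝ) + 1) * G * E a))
      ≤ (((a : ℝ) + 1) * F * (((d : ℝ) + 1) * G * E (a + 1))) ^ 2 := by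
    rw [← hr2, ← hr0, ← hr1]
    calc (2 * r.coeff 2) * (2 * r.coeff 0) = 4 * r.coeff 2 * r.coeff 0 := by ring
      _ ≤ r.coeff 1 ^ 2 := key
  have h5 : E (a + 2) * E a * (((a : ℝ) + 2) * ((d : ℝ) + 2))
        * ((((a : ℝ) + 1) * ((d : ℝ) + 1)) * (F * G) ^ 2)
      ≤ (((a : ℝ) + 1) * ((d : ℝ) + 1)) * E (a + 1) ^ 2
        * ((((a : ℝ) + 1) * ((d : ℝ) + 1)) * (F * G) ^ 2) := by
    calc E (a + 2) * E a * (((a : ℝ) + 2) * ((d : ℝ) + 2))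
          * ((((a : ℝ) + 1) * ((d : ℝ) + 1)) * (F * G) ^ 2)
        = (((a : ℝ) + 2) * ((a : ℝ) + 1) * F * (G * E (a + 2)))
            * (F * (((d : ℝ) + 2) * ((d : ℝ) + 1) * G * E a)) := by ring
      _ ≤ (((a : ℝ) + 1) * F * (((d : ℝ) + 1) * G * E (a + 1))) ^ 2 := h4
      _ = (((a : ℝ) + 1) * ((d : ℝ) + 1)) * E (a + 1) ^ 2
            * ((((a : ℝ) + 1) * ((d : ℝ) + 1)) * (F * G) ^ 2) := by ring
  exact le_of_mul_le_mul_right h5 hc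

/-- Newton's inequality for `(n-1)`-tuples. -/
theorem newton_ineq (n k : ℕ) (hk : 2 ≤ k) (hkn : k ≤ n - 1) (lam : Fin (n - 1) → ℝ) :
    esymm (n - 1) k lam * esymm (n - 1) (k - 2) lam ≤
      (((k : ℝ) - 1) * ((n : ℝ) - k)) / ((k : ℝ) * ((n : ℝ) - k + 1)) *
        (esymm (n - 1) (k - 1) lam) ^ 2 := by
  have hc : ((n - 1 : ℕ) : ℝ) = (n : ℝ) - 1 := by
    rw [Nat.cast_sub (by omega)]; norm_num
  have h := newton_core (n - 1) k hk hkn lam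
  rw [hc] at h
  have heq : (((k : ℝ) - 1) * (((n : ℝ) - 1) - k + 1)) / ((k : ℝ) * (((n : ℝ) - 1) - k + 2))
      = (((k : ℝ) - 1) * ((n : ℝ) - k)) / ((k : ℝ) * ((n : ℝ) - k + 1)) := by
    ring_nf
  rwa [heq] at h
end

section
/- Let c_k,…,c_n > 0, α > 0 with α < (1/(16(n−k)² + 4(n−k+1))) · min_{k≤j≤n} (c_j/(2σ)) for some σ > 0, and define P¹(y'') = (1/12)·Σ_{i=k}^n [c_i/σ − 4α(n−k)]·y_i⁴ + α·Σ_{j=k}^n Σ_{i=k, i≠j}^n y_i² y_j² on ℝ^{n−k+1}. Then for all y'' and each fixed j₀ with k ≤ j₀ ≤ n, the second derivative satisfies P¹_{j₀j₀}(y'') ≥ 2α|y''|² + Σ_{i≠j₀} |P¹_{i j₀}(y'')|; in particular the Hessian matrix (P¹_{ij}(y''))_{k≤i,j≤n} is strictly diagonally dominant whenever y'' ≠ 0. -/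
/-- The model quartic `P¹(y'') = (1/12)∑ᵢ [cᵢ/σ − 4α(m−1)] yᵢ⁴ + α ∑_{j}∑_{i≠j} yᵢ²yⱼ²`,
in `m = n−k+1` variables (so `m − 1 = n − k`). -/
noncomputable def P1 (m : ℕ) (c : Fin m → ℝ) (σ α : ℝ) : (Fin m → ℝ) → ℝ :=
  fun y => (1 / 12) * ∑ i, (c i / σ - 4 * α * ((m : ℝ) - 1)) * (y i) ^ 4
    + α * ∑ j, ∑ i ∈ Finset.univ.erase j, (y i) ^ 2 * (y j) ^ 2

/-- Second partial derivative `∂²f/∂yᵢ∂yⱼ`. -/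
noncomputable def D2 (m : ℕ) (f : (Fin m → ℝ) → ℝ) (y : Fin m → ℝ) (i j : Fin m) : ℝ :=
  fderiv ℝ (fun x => fderiv ℝ f x (Pi.single i 1)) y (Pi.single j 1)

open Finset

section
variable (m : ℕ) (c : Fin m → ℝ) (σ α : ℝ)

noncomputable def Dsq (x : Fin m → ℝ) (k : Fin m) : (Fin m → ℝ) →L[ℝ] ℝ :=
  x k • ContinuousLinearMap.proj k + x k • ContinuousLinearMap.proj k

lemma hasFDerivAt_P1 (x : Fin m → ℝ) :
    HasFDerivAt (P1 m c σ α)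
      ((1/12 : ℝ) • ∑ k, (c k / σ - 4 * α * ((m : ℝ) - 1)) •
          ((x k * x k) • Dsq m x k + (x k * x k) • Dsq m x k)
        + α • ∑ j, ∑ i ∈ Finset.univ.erase j,
          ((x i * x i) • Dsq m x j + (x j * x j) • Dsq m x i)) x := by
  have hp : ∀ k : Fin m, HasFDerivAt (fun y : Fin m → ℝ => y k)
      (ContinuousLinearMap.proj k : (Fin m → ℝ) →L[ℝ] ℝ) x := fun k => hasFDerivAt_apply k x
  have hsq : ∀ k : Fin m, HasFDerivAt (fun y : Fin m → ℝ => y k * y k) (Dsq m x k) x :=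
    fun k => (hp k).mul (hp k)
  have h4 : ∀ k : Fin m, HasFDerivAt (fun y : Fin m → ℝ => (y k * y k) * (y k * y k))
      ((x k * x k) • Dsq m x k + (x k * x k) • Dsq m x k) x := fun k => (hsq k).mul (hsq k)
  have key : HasFDerivAt (fun y : Fin m → ℝ =>
      (1 / 12) * ∑ k, (c k / σ - 4 * α * ((m : ℝ) - 1)) * ((y k * y k) * (y k * y k))
        + α * ∑ j, ∑ i ∈ Finset.univ.erase j, (y i * y i) * (y j * y j)) _ x :=
    HasFDerivAt.add
      (HasFDerivAt.const_mul (HasFDerivAt.fun_sum (fun k _ => (h4 k).const_mul _)) _)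
      (HasFDerivAt.const_mul (HasFDerivAt.fun_sum (fun j _ =>
        HasFDerivAt.fun_sum (fun i _ => (hsq i).mul (hsq j)))) _)
  have : P1 m c σ α = (fun y : Fin m → ℝ =>
      (1 / 12) * ∑ k, (c k / σ - 4 * α * ((m : ℝ) - 1)) * ((y k * y k) * (y k * y k))
        + α * ∑ j, ∑ i ∈ Finset.univ.erase j, (y i * y i) * (y j * y j)) := by
    funext y; unfold P1
    congr 1
    · congr 1
      exact Finset.sum_congr rfl (fun k _ => by ring)
    · congr 1
      exact Finset.sum_congr rfl (fun j _ => Finset.sum_congr rfl (fun i _ => by ring))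
  rw [this]
  exact key

lemma fderiv_P1_apply (x : Fin m → ℝ) (i : Fin m) :
    fderiv ℝ (P1 m c σ α) x (Pi.single i 1) =
      (1/3) * (c i / σ - 4 * α * ((m : ℝ) - 1)) * x i ^ 3
        + 4 * α * x i * ∑ j ∈ Finset.univ.erase i, x j ^ 2 := by
  rw [(hasFDerivAt_P1 m c σ α x).fderiv]
  simp only [Dsq, ContinuousLinearMap.add_apply, ContinuousLinearMap.smul_apply,
    ContinuousLinearMap.coe_sum', Finset.sum_apply, ContinuousLinearMap.proj_apply,
    Pi.single_apply, smul_eq_mul]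
  simp only [mul_ite, mul_one, mul_zero, zero_add, add_zero, ite_add_ite, Finset.sum_add_distrib,
    Finset.sum_ite_eq', Finset.mem_univ, if_true, Finset.mem_erase, ne_eq, and_true,
    ← Finset.sum_filter, Finset.filter_const, apply_ite (fun s : Finset (Fin m) => ∑ a ∈ s, x a * x a * (x i + x i)), Finset.sum_empty, Finset.sum_ite_eq']
  have h2 : ∀ x1 : Fin m, (∑ x_2 ∈ if x1 = i then Finset.univ.erase x1 else ∅,
      x x_2 * x x_2 * (x x1 + x x1))
      = if x1 = i then (∑ x_2 ∈ Finset.univ.erase i, x x_2 * x x_2 * (x i + x i)) else 0 := by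
    intro x1; split <;> simp_all
  have h3 : Finset.filter (fun a => ¬i = a) (Finset.univ : Finset (Fin m)) =
      Finset.univ.erase i := by
    ext a; simp [eq_comm]
  have h4 : (∑ x_2 ∈ Finset.univ.erase i, x x_2 * x x_2 * (x i + x i))
      = (∑ j ∈ Finset.univ.erase i, x j ^ 2) * (2 * x i) := by
    rw [Finset.sum_mul]; exact Finset.sum_congr rfl (fun a _ => by ring)
  simp only [h2, h3, Finset.sum_ite_eq', Finset.mem_univ, if_true, h4]
  ring
end

section
variable (m : ℕ) (c : Fin m → ℝ) (σ α : ℝ)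

lemma hasFDerivAt_g (i : Fin m) (x : Fin m → ℝ) :
    HasFDerivAt (fun x => fderiv ℝ (P1 m c σ α) x (Pi.single i 1))
      ((1/3 * (c i / σ - 4 * α * ((m : ℝ) - 1))) •
          (x i • Dsq m x i + (x i * x i) • (ContinuousLinearMap.proj i : (Fin m → ℝ) →L[ℝ] ℝ))
        + (4 * α) • (x i • (∑ k ∈ Finset.univ.erase i, Dsq m x k)
            + (∑ k ∈ Finset.univ.erase i, x k * x k) •
              (ContinuousLinearMap.proj i : (Fin m → ℝ) →L[ℝ] ℝ))) x := by
  have hfun : (fun x : Fin m → ℝ => fderiv ℝ (P1 m c σ α) x (Pi.single i 1)) =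
      fun x => (1/3 * (c i / σ - 4 * α * ((m : ℝ) - 1))) * (x i * (x i * x i))
        + (4 * α) * (x i * ∑ j ∈ Finset.univ.erase i, x j * x j) := by
    funext x
    rw [fderiv_P1_apply]
    have : (∑ j ∈ Finset.univ.erase i, x j ^ 2) = ∑ j ∈ Finset.univ.erase i, x j * x j :=
      Finset.sum_congr rfl (fun a _ => sq (x a))
    rw [this]; ring
  rw [hfun]
  have hp : ∀ k : Fin m, HasFDerivAt (fun y : Fin m → ℝ => y k)
      (ContinuousLinearMap.proj k : (Fin m → ℝ) →L[ℝ] ℝ) x := fun k => hasFDerivAt_apply k x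
  have hsq : ∀ k : Fin m, HasFDerivAt (fun y : Fin m → ℝ => y k * y k) (Dsq m x k) x :=
    fun k => (hp k).mul (hp k)
  exact HasFDerivAt.add
    (((hp i).mul (hsq i)).const_mul _)
    (((hp i).mul (HasFDerivAt.fun_sum (fun k _ => hsq k))).const_mul _)
end

section
variable (m : ℕ) (c : Fin m → ℝ) (σ α : ℝ)

lemma D2_P1 (y : Fin m → ℝ) (i j : Fin m) :
    D2 m (P1 m c σ α) y i j = if i = j then
        (c i / σ - 4 * α * ((m : ℝ) - 1)) * y i ^ 2
          + 4 * α * ∑ k ∈ Finset.univ.erase i, y k ^ 2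
      else 8 * α * y i * y j := by
  unfold D2
  rw [(hasFDerivAt_g m c σ α i y).fderiv]
  simp only [Dsq, ContinuousLinearMap.add_apply, ContinuousLinearMap.smul_apply,
    ContinuousLinearMap.coe_sum', Finset.sum_apply, ContinuousLinearMap.proj_apply,
    Pi.single_apply, smul_eq_mul, mul_ite, mul_one, mul_zero, zero_add, add_zero,
    Finset.sum_ite_eq', Finset.mem_erase, ne_eq, Finset.mem_univ, and_true]
  by_cases h : i = j
  · subst h
    simp only [if_pos rfl]
    have hs : (∑ x ∈ Finset.univ.erase i, ((if x = i then y x else 0) + if x = i then y x else 0)) = 0 :=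
      Finset.sum_eq_zero (fun x hx => by simp [Finset.ne_of_mem_erase hx])
    rw [hs]
    have h2 : (∑ k ∈ Finset.univ.erase i, y k * y k) = ∑ k ∈ Finset.univ.erase i, y k ^ 2 :=
      Finset.sum_congr rfl (fun a _ => (sq (y a)).symm)
    rw [h2]
    simp only [if_pos rfl, eq_self_iff_true, if_true]
    ring
  · have hs : (∑ x ∈ Finset.univ.erase i, ((if x = j then y x else 0) + if x = j then y x else 0))
        = y j + y j := by
      simp [Finset.sum_add_distrib, Finset.sum_ite_eq', Finset.mem_erase, Ne.symm h]
    simp only [if_neg h, hs]; ring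
end

theorem P1_hessian_diag_dominant (m : ℕ) (c : Fin m → ℝ) (σ α : ℝ)
    (hσ : 0 < σ) (hc : ∀ i, 0 < c i) (hα : 0 < α)
    (hαsmall : ∀ j : Fin m,
      α < 1 / (16 * ((m : ℝ) - 1) ^ 2 + 4 * (m : ℝ)) * (c j / (2 * σ))) :
    (∀ (y : Fin m → ℝ) (j₀ : Fin m),
      2 * α * (∑ i, (y i) ^ 2) + ∑ i ∈ Finset.univ.erase j₀, |D2 m (P1 m c σ α) y i j₀| ≤
        D2 m (P1 m c σ α) y j₀ j₀) ∧
    (∀ y : Fin m → ℝ, y ≠ 0 → ∀ j₀ : Fin m,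
      ∑ i ∈ Finset.univ.erase j₀, |D2 m (P1 m c σ α) y i j₀| < D2 m (P1 m c σ α) y j₀ j₀) := by
  have key : ∀ (y : Fin m → ℝ) (j₀ : Fin m),
      2 * α * (∑ i, (y i) ^ 2) + ∑ i ∈ Finset.univ.erase j₀, |D2 m (P1 m c σ α) y i j₀| ≤
        D2 m (P1 m c σ α) y j₀ j₀ := by
    intro y j₀
    have hm : (1 : ℝ) ≤ (m : ℝ) := by
      have := j₀.pos; exact_mod_cast this
    have hcard : ((Finset.univ.erase j₀).card : ℝ) = (m : ℝ) - 1 := by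
      rw [Finset.card_erase_of_mem (Finset.mem_univ _), Finset.card_univ, Fintype.card_fin]
      have hm' := j₀.pos
      push_cast [Nat.cast_sub hm'] ; ring
    set S := ∑ i ∈ Finset.univ.erase j₀, y i ^ 2 with hS
    have hSnn : 0 ≤ S := Finset.sum_nonneg (fun i _ => sq_nonneg _)
    have hsplit : (∑ i, y i ^ 2) = S + y j₀ ^ 2 := (Finset.sum_erase_add _ _ (Finset.mem_univ j₀)).symm
    have hdiag : D2 m (P1 m c σ α) y j₀ j₀ =
        (c j₀ / σ - 4 * α * ((m : ℝ) - 1)) * y j₀ ^ 2 + 4 * α * S := by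
      rw [D2_P1, if_pos rfl]
    have hbound : ∑ i ∈ Finset.univ.erase j₀, |D2 m (P1 m c σ α) y i j₀| ≤
        ∑ i ∈ Finset.univ.erase j₀, α * (8 * y j₀ ^ 2 + 2 * y i ^ 2) := by
      refine Finset.sum_le_sum (fun i hi => ?_)
      rw [D2_P1, if_neg (Finset.ne_of_mem_erase hi)]
      have h1 : |8 * α * y i * y j₀| = 8 * α * (|y i| * |y j₀|) := by
        rw [abs_mul, abs_mul, abs_of_nonneg (by linarith : (0:ℝ) ≤ 8 * α)]
        ring
      rw [h1]
      nlinarith [sq_nonneg (2 * |y j₀| - |y i|), sq_abs (y i), sq_abs (y j₀),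
        abs_nonneg (y i), abs_nonneg (y j₀), hα.le]
    have hsum2 : ∑ i ∈ Finset.univ.erase j₀, α * (8 * y j₀ ^ 2 + 2 * y i ^ 2) =
        α * (8 * y j₀ ^ 2 * ((m : ℝ) - 1) + 2 * S) := by
      rw [← Finset.mul_sum, Finset.sum_add_distrib, Finset.sum_const, nsmul_eq_mul,
        ← Finset.mul_sum, hcard]
      ring
    have hA : 2 * α + 12 * α * ((m : ℝ) - 1) ≤ c j₀ / σ - 4 * α * ((m : ℝ) - 1) + (- 8 * α * ((m:ℝ)-1)) + 8 * α * ((m:ℝ)-1) := by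
      have h := hαsmall j₀
      have hK : (0:ℝ) < 16 * ((m : ℝ) - 1) ^ 2 + 4 * (m : ℝ) := by nlinarith [sq_nonneg ((m:ℝ)-1)]
      rw [one_div_mul_eq_div, lt_div_iff₀ hK] at h
      have hc2 : c j₀ / σ = 2 * (c j₀ / (2 * σ)) := by field_simp
      rw [hc2]
      nlinarith [mul_nonneg hα.le (sq_nonneg (8 * ((m:ℝ)-1) - 1)),
        mul_nonneg hα.le (sq_nonneg ((m:ℝ)-1)),
        mul_nonneg hα.le (by linarith : (0:ℝ) ≤ (m:ℝ) - 1)]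
    rw [hdiag, hsplit]
    have := le_trans hbound (le_of_eq hsum2)
    nlinarith [this, hA, sq_nonneg (y j₀), hSnn, hα.le,
      mul_nonneg (mul_nonneg hα.le (by linarith : (0:ℝ) ≤ (m:ℝ)-1)) (sq_nonneg (y j₀))]
  refine ⟨key, fun y hy j₀ => ?_⟩
  have hpos : 0 < ∑ i, y i ^ 2 := by
    have hex : ∃ i, y i ≠ 0 := by
      by_contra hno; push_neg at hno; exact hy (funext hno)
    obtain ⟨i, hi⟩ := hex
    exact Finset.sum_pos' (fun i _ => sq_nonneg _) ⟨i, Finset.mem_univ _, by positivity⟩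
  have := key y j₀
  nlinarith [this, mul_pos hα hpos]
end
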